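/- Let G be a graph, B a PSD forcing set, F a relaxed chronology of PSD forces of B on G, x a vertex of G, and Q the path bundle of F induced by x. Then Q is a rigid linkage of G. -/

import Mathlib

namespace ZF

variable {V : Type*} [Fintype V] [DecidableEq V]

/-- A valid standard zero forcing force within the vertex set `U`, given blue set `B`:
`u` is blue, `v` is its unique white neighbor in `U`. -/
def ZFValid (G : SimpleGraph V) (U B : Set V) (u v : V) : Prop :=
  u ∈ U ∧ v ∈ U ∧ u ∈ B ∧ v ∉ B ∧ G.Adj u v ∧
    ∀ w ∈ U, G.Adj u w → w ∉ B → w = v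

/-- `whiteConn G U B a b` : `a` and `b` are joined by a walk through white
(non-blue) vertices of `U` (possibly trivial). -/
def whiteConn (G : SimpleGraph V) (U B : Set V) : V → V → Prop :=
  Relation.ReflTransGen (fun a b => G.Adj a b ∧ a ∈ U ∧ b ∈ U ∧ a ∉ B ∧ b ∉ B)

/-- A valid PSD force within the vertex set `U`, given blue set `B`:
`u` is blue and `v` is the unique neighbor of `u` in the component of the
white subgraph containing `v`. -/
def PSDValid (G : SimpleGraph V) (U B : Set V) (u v : V) : Prop :=
  u ∈ U ∧ v ∈ U ∧ u ∈ B ∧ v ∉ B ∧ G.Adj u v ∧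
    ∀ w ∈ U, G.Adj u w → w ∉ B → whiteConn G U B v w → w = v

/-- One propagation step for a generic color change rule `valid`. -/
def step (valid : Set V → V → V → Prop) (B : Set V) : Set V :=
  B ∪ {v | ∃ u, valid B u v}

/-- Iterated propagation. -/
def iter (valid : Set V → V → V → Prop) (B : Set V) : ℕ → Set V :=
  fun k => (step valid)^[k] B

/-- `B ⊆ U` is a forcing set of the induced subgraph on `U` for the rule `valid`. -/
def IsForcingSet (valid : Set V → V → V → Prop) (U B : Set V) : Prop :=
  B ⊆ U ∧ ∃ k, U ⊆ iter valid B k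

/-- Propagation time of the set `B` for rule `valid` on the induced subgraph on `U`. -/
noncomputable def propTime (valid : Set V → V → V → Prop) (U B : Set V) : ℕ :=
  sInf {k | U ⊆ iter valid B k}

/-- Vertices blue after `k` time-steps of the family of forces `F`, starting from `B`. -/
def expand (B : Set V) (F : ℕ → Set (V × V)) : ℕ → Set V
  | 0 => B
  | k + 1 => expand B F k ∪ {v | ∃ u, (u, v) ∈ F (k + 1)}

/-- A relaxed chronology of forces (for the rule `valid`) for the forcing set `B`
on the induced subgraph on `U`, with completion time `K`: at each time-step an
arbitrary subset of the currently valid forces is performed (no vertex being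
forced twice in one step), and all of `U` is blue after step `K`. -/
structure RelaxedChron (valid : Set V → V → V → Prop) (U B : Set V)
    (K : ℕ) (F : ℕ → Set (V × V)) : Prop where
  subset : B ⊆ U
  init : F 0 = ∅
  bound : ∀ k, K < k → F k = ∅
  forcesValid : ∀ k < K, ∀ u v, (u, v) ∈ F (k + 1) → valid (expand B F k) u v
  uniqueForcer : ∀ k u₁ u₂ v, (u₁, v) ∈ F k → (u₂, v) ∈ F k → u₁ = u₂
  complete : U ⊆ expand B F K

/-- The underlying set of forces of a relaxed chronology. -/
def forcesOf (F : ℕ → Set (V × V)) (K : ℕ) : Set (V × V) :=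
  {p | ∃ k, 1 ≤ k ∧ k ≤ K ∧ p ∈ F k}

/-- The terminus of a relaxed chronology: the vertices (of `U`) performing no force. -/
def terminus (U : Set V) (F : ℕ → Set (V × V)) (K : ℕ) : Set V :=
  {v ∈ U | ∀ u, (v, u) ∉ forcesOf F K}

/-- The reversal of a relaxed chronology: each force is reversed and
the order of the time-steps is reversed. -/
def revChron (F : ℕ → Set (V × V)) (K : ℕ) : ℕ → Set (V × V) :=
  fun k => if 1 ≤ k ∧ k ≤ K then {p | (p.2, p.1) ∈ F (K - k + 1)} else ∅

/-- One round of performing all currently valid forces from the set of forces `S`. -/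
def forceStep (valid : Set V → V → V → Prop) (S : Set (V × V)) (B : Set V) : Set V :=
  B ∪ {v | ∃ u, (u, v) ∈ S ∧ valid B u v}

def forceIter (valid : Set V → V → V → Prop) (S : Set (V × V)) (B : Set V) : ℕ → Set V :=
  fun t => (forceStep valid S)^[t] B

/-- Propagation time of a set of forces `S` for starting set `B` on `U`. -/
noncomputable def ptForces (valid : Set V → V → V → Prop) (U : Set V)
    (S : Set (V × V)) (B : Set V) : ℕ :=
  sInf {t | U ⊆ forceIter valid S B t}

/-- `v` is active at time-step `k` of the relaxed chronology `F`:
it is blue after step `k` and has not yet performed a force. -/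
def activeAt (B : Set V) (F : ℕ → Set (V × V)) (v : V) (k : ℕ) : Prop :=
  v ∈ expand B F k ∧ ∀ j ≤ k, ∀ u, (v, u) ∉ F j

/-- The zero forcing number. -/
noncomputable def Z (G : SimpleGraph V) : ℕ :=
  sInf {n | ∃ B : Set V, B.ncard = n ∧ IsForcingSet (ZFValid G Set.univ) Set.univ B}

/-- The PSD forcing number. -/
noncomputable def Zplus (G : SimpleGraph V) : ℕ :=
  sInf {n | ∃ B : Set V, B.ncard = n ∧ IsForcingSet (PSDValid G Set.univ) Set.univ B}

/-- Standard `m`-propagation time `pt(G,m)`. -/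
noncomputable def ptm (G : SimpleGraph V) (m : ℕ) : ℕ :=
  sInf {t | ∃ B : Set V, B.ncard = m ∧ IsForcingSet (ZFValid G Set.univ) Set.univ B ∧
    propTime (ZFValid G Set.univ) Set.univ B = t}

/-- PSD `m`-propagation time `pt₊(G,m)`. -/
noncomputable def ptplusm (G : SimpleGraph V) (m : ℕ) : ℕ :=
  sInf {t | ∃ B : Set V, B.ncard = m ∧ IsForcingSet (PSDValid G Set.univ) Set.univ B ∧
    propTime (PSDValid G Set.univ) Set.univ B = t}

/-- Standard propagation time `pt(G)`. -/
noncomputable def pt (G : SimpleGraph V) : ℕ := ptm G (Z G)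

/-- PSD propagation time `pt₊(G)`. -/
noncomputable def ptplus (G : SimpleGraph V) : ℕ := ptplusm G (Zplus G)

/-- PSD throttling number `thr₊(G)`. -/
noncomputable def thrplus (G : SimpleGraph V) : ℕ :=
  sInf {t | ∃ B : Set V, IsForcingSet (PSDValid G Set.univ) Set.univ B ∧
    t = B.ncard + propTime (PSDValid G Set.univ) Set.univ B}

/-- Closed neighborhood of a set. -/
def closedNbhd (G : SimpleGraph V) (B : Set V) : Set V :=
  B ∪ {v | ∃ u ∈ B, G.Adj u v}

/-- Power domination process: the first step colors the closed neighborhood,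
subsequent steps apply the standard zero forcing rule. -/
def pdIter (G : SimpleGraph V) (B : Set V) : ℕ → Set V
  | 0 => B
  | 1 => closedNbhd G B
  | (k + 2) => step (ZFValid G Set.univ) (pdIter G B (k + 1))

/-- `B` is a power dominating set. -/
def IsPDSet (G : SimpleGraph V) (B : Set V) : Prop :=
  ∃ k, Set.univ ⊆ pdIter G B k

/-- Power propagation time of a set. -/
noncomputable def pdPropTime (G : SimpleGraph V) (B : Set V) : ℕ :=
  sInf {k | Set.univ ⊆ pdIter G B k}

/-- Power `m`-propagation time `ppt(G,m)`. -/
noncomputable def pptm (G : SimpleGraph V) (m : ℕ) : ℕ :=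
  sInf {t | ∃ B : Set V, B.ncard = m ∧ IsPDSet G B ∧ pdPropTime G B = t}

/-- Restriction of a family of forces to those with both endpoints in `W`. -/
def restrictF (F : ℕ → Set (V × V)) (W : Set V) : ℕ → Set (V × V) :=
  fun k => {p ∈ F k | p.1 ∈ W ∧ p.2 ∈ W}

/-- The forcing tree of `b` : all vertices reachable from `b` by a chain of forces in `S`. -/
def treeOf (S : Set (V × V)) (b : V) : Set V :=
  {w | Relation.ReflTransGen (fun a c => (a, c) ∈ S) b w}

open Classical in
/-- The endpoint, after `k` steps, of the path grown from `b ∈ B` in the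
path bundle of the relaxed chronology `F` induced by the vertex `x`: the path is
extended by a force from its current endpoint into the component of white
vertices containing `x`, whenever such a force occurs. -/
noncomputable def lastVert (G : SimpleGraph V) (B : Set V) (F : ℕ → Set (V × V))
    (x : V) (b : V) : ℕ → V
  | 0 => b
  | k + 1 =>
    if h : ∃ w, (lastVert G B F x b k, w) ∈ F (k + 1) ∧ x ∉ expand B F k ∧
        whiteConn G Set.univ (expand B F k) x w
    then h.choose else lastVert G B F x b k

/-- The vertex set of the path bundle of `F` induced by `x`. -/
def bundle (G : SimpleGraph V) (B : Set V) (F : ℕ → Set (V × V)) (x : V) (K : ℕ) : Set V :=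
  {v | ∃ b ∈ B, ∃ j ≤ K, lastVert G B F x b j = v}

/-- The path of the bundle grown from `b`, as a list of vertices. -/
noncomputable def bundlePath (G : SimpleGraph V) (B : Set V) (F : ℕ → Set (V × V))
    (x : V) (K : ℕ) (b : V) : List V :=
  ((List.range (K + 1)).map (lastVert G B F x b)).dedup

/-- A nonempty path in `G`, given as a list of distinct consecutively adjacent vertices. -/
def IsPathList (G : SimpleGraph V) (l : List V) : Prop :=
  l ≠ [] ∧ l.Nodup ∧ l.Chain' G.Adj

/-- `P` is an `(α,β)`-linkage: a collection of pairwise vertex-disjoint paths,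
`α` consisting of one endpoint of each path and `β` of the other endpoints. -/
def IsLinkage (G : SimpleGraph V) (α β : Set V) (P : Set (List V)) : Prop :=
  (∀ l ∈ P, IsPathList G l) ∧
  (∀ l ∈ P, ∀ l' ∈ P, l ≠ l' → ∀ v, v ∈ l → v ∉ l') ∧
  (∀ l ∈ P, ∀ l' ∈ P, l.head? = l'.head? → l = l') ∧
  (∀ l ∈ P, ∀ l' ∈ P, l.getLast? = l'.getLast? → l = l') ∧
  α = {v | ∃ l ∈ P, l.head? = some v} ∧
  β = {v | ∃ l ∈ P, l.getLast? = some v}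

/-- `P` is a rigid linkage: for some `α`, `β` it is the unique `(α,β)`-linkage in `G`. -/
def IsRigidLinkage (G : SimpleGraph V) (P : Set (List V)) : Prop :=
  ∃ α β, IsLinkage G α β P ∧ ∀ P', IsLinkage G α β P' → P' = P

/-- A path cover of `G` : `m` vertex-disjoint induced paths covering all vertices,
the `i`-th path having vertices `vtx i 0, …, vtx i (n i − 1)` in path order. -/
structure IsPathCover (G : SimpleGraph V) (m : ℕ) (n : Fin m → ℕ)
    (vtx : (i : Fin m) → Fin (n i) → V) : Prop where
  pos : ∀ i, 0 < n i
  inj : Function.Injective (fun p : (i : Fin m) × Fin (n i) => vtx p.1 p.2)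
  cover : ∀ v : V, ∃ i j, vtx i j = v
  induced : ∀ i (j j' : Fin (n i)),
    G.Adj (vtx i j) (vtx i j') ↔ ((j : ℕ) + 1 = (j' : ℕ) ∨ (j' : ℕ) + 1 = (j : ℕ))

/-- A witness that a path cover is a parallel increasing path cover: a collection of
block partitions of `{0,…,K}`, one per path, compatible with the edges of `G`. -/
structure IsPIPWitness (G : SimpleGraph V) (m : ℕ) (n : Fin m → ℕ)
    (vtx : (i : Fin m) → Fin (n i) → V) (K : ℕ)
    (A : (i : Fin m) → Fin (n i) → Finset ℕ) : Prop where
  mem : ∀ i j, A i j ⊆ Finset.range (K + 1)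
  nonempty : ∀ i j, (A i j).Nonempty
  partition : ∀ i, ∀ x ∈ Finset.range (K + 1), ∃! j, x ∈ A i j
  mono : ∀ i (j j' : Fin (n i)), (j : ℕ) < (j' : ℕ) → ∀ x ∈ A i j, ∀ y ∈ A i j', x < y
  edge : ∀ (i i' : Fin m) j j', i ≠ i' →
    G.Adj (vtx i j) (vtx i' j') → ((A i j) ∩ (A i' j')).Nonempty

/-- A parallel increasing path cover of `G`. -/
def IsPIP (G : SimpleGraph V) (m : ℕ) (n : Fin m → ℕ)
    (vtx : (i : Fin m) → Fin (n i) → V) : Prop :=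
  IsPathCover G m n vtx ∧ ∃ K A, IsPIPWitness G m n vtx K A

/-- The path cover given by `vtx` is the chain set of the family of forces `F` :
the underlying forces are exactly the consecutive pairs along the paths. -/
def IsChainSetOf (m : ℕ) (n : Fin m → ℕ) (vtx : (i : Fin m) → Fin (n i) → V)
    (F : ℕ → Set (V × V)) (K : ℕ) : Prop :=
  ∀ u w, (u, w) ∈ forcesOf F K ↔
    ∃ (i : Fin m) (j : Fin (n i)) (j' : Fin (n i)),
      u = vtx i j ∧ w = vtx i j' ∧ (j : ℕ) + 1 = (j' : ℕ)

end ZF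

set_option linter.unusedSectionVars false
namespace ZFRig
open ZF

variable {V : Type*} [Fintype V] [DecidableEq V]
variable {G : SimpleGraph V} {B : Set V} {K : ℕ} {F : ℕ → Set (V × V)} {x : V}

lemma whiteConn_symm {U Bl : Set V} {a b : V} (h : whiteConn G U Bl a b) :
    whiteConn G U Bl b a :=
  @Std.Symm.symm _ _ (@Relation.ReflTransGen.symmetric _ _
    ⟨fun _ _ h => ⟨h.1.symm, h.2.2.1, h.2.1, h.2.2.2.2, h.2.2.2.1⟩⟩) _ _ h

lemma whiteConn_mono {U B1 B2 : Set V} (hsub : B1 ⊆ B2) {a b : V}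
    (h : whiteConn G U B2 a b) : whiteConn G U B1 a b := by
  induction h with
  | refl => exact .refl
  | tail _ h2 ih =>
      exact ih.tail ⟨h2.1, h2.2.1, h2.2.2.1, fun hx => h2.2.2.2.1 (hsub hx),
        fun hx => h2.2.2.2.2 (hsub hx)⟩

lemma expand_zero : expand B F 0 = B := rfl

lemma expand_succ (k : ℕ) :
    expand B F (k+1) = expand B F k ∪ {v | ∃ u, (u, v) ∈ F (k + 1)} := rfl

lemma expand_subset_succ (k : ℕ) : expand B F k ⊆ expand B F (k+1) :=
  Set.subset_union_left

lemma expand_mono {s t : ℕ} (h : s ≤ t) : expand B F s ⊆ expand B F t := by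
  induction t with
  | zero => rw [Nat.le_zero.mp h]
  | succ t ih =>
      rcases Nat.le_succ_iff.mp h with h' | h'
      · exact (ih h').trans (expand_subset_succ t)
      · rw [h']

lemma valid_of_mem_F (hF : RelaxedChron (PSDValid G Set.univ) Set.univ B K F) {k : ℕ} {u v : V} (h : (u, v) ∈ F (k+1)) :
    PSDValid G Set.univ (expand B F k) u v := by
  rcases lt_or_ge k K with hk | hk
  · exact hF.forcesValid k hk u v h
  · rw [hF.bound (k+1) (by omega)] at h
    exact absurd h (Set.notMem_empty _)

lemma target_mem_expand {k : ℕ} {u v : V} (h : (u, v) ∈ F (k+1)) :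
    v ∈ expand B F (k+1) :=
  Set.mem_union_right _ ⟨u, h⟩

lemma le_K_of_mem_F (hF : RelaxedChron (PSDValid G Set.univ) Set.univ B K F) {k : ℕ} {u v : V} (h : (u, v) ∈ F k) : k ≤ K := by
  by_contra hk
  rw [hF.bound k (by omega)] at h
  exact absurd h (Set.notMem_empty _)

lemma lastVert_zero (b : V) : lastVert G B F x b 0 = b := rfl

lemma lastVert_succ_of_not {b : V} {k : ℕ}
    (h : ¬ ∃ w, (lastVert G B F x b k, w) ∈ F (k + 1) ∧ x ∉ expand B F k ∧
        whiteConn G Set.univ (expand B F k) x w) :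
    lastVert G B F x b (k+1) = lastVert G B F x b k := by
  rw [lastVert, dif_neg h]

lemma lastVert_succ_spec {b : V} {k : ℕ}
    (h : ∃ w, (lastVert G B F x b k, w) ∈ F (k + 1) ∧ x ∉ expand B F k ∧
        whiteConn G Set.univ (expand B F k) x w) :
    (lastVert G B F x b k, lastVert G B F x b (k+1)) ∈ F (k + 1) ∧ x ∉ expand B F k ∧
        whiteConn G Set.univ (expand B F k) x (lastVert G B F x b (k+1)) := by
  rw [lastVert, dif_pos h]
  exact h.choose_spec

lemma lastVert_mem_expand {b : V} (hb : b ∈ B) (t : ℕ) :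
    lastVert G B F x b t ∈ expand B F t := by
  induction t with
  | zero => exact hb
  | succ k ih =>
      by_cases h : ∃ w, (lastVert G B F x b k, w) ∈ F (k + 1) ∧ x ∉ expand B F k ∧
          whiteConn G Set.univ (expand B F k) x w
      · exact Set.mem_union_right _ ⟨_, (lastVert_succ_spec h).1⟩
      · rw [lastVert_succ_of_not h]; exact expand_subset_succ k ih

/-- If the bundle path moves at step `k+1`, the force is recorded with all its data. -/
lemma move_spec (hF : RelaxedChron (PSDValid G Set.univ) Set.univ B K F) {b : V} {k : ℕ}
    (hmv : lastVert G B F x b (k+1) ≠ lastVert G B F x b k) :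
    (lastVert G B F x b k, lastVert G B F x b (k+1)) ∈ F (k + 1) ∧ x ∉ expand B F k ∧
      whiteConn G Set.univ (expand B F k) x (lastVert G B F x b (k+1)) ∧
      lastVert G B F x b (k+1) ∉ expand B F k ∧
      G.Adj (lastVert G B F x b k) (lastVert G B F x b (k+1)) ∧ k + 1 ≤ K := by
  by_cases h : ∃ w, (lastVert G B F x b k, w) ∈ F (k + 1) ∧ x ∉ expand B F k ∧
      whiteConn G Set.univ (expand B F k) x w
  · obtain ⟨h1, h2, h3⟩ := lastVert_succ_spec h
    have hv := valid_of_mem_F hF h1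
    exact ⟨h1, h2, h3, hv.2.2.2.1, hv.2.2.2.2.1, le_K_of_mem_F hF h1⟩
  · exact absurd (lastVert_succ_of_not h) hmv

/-- Determinism: if there is a force from the current endpoint into the white
component of `x`, then the bundle moves along it. -/
lemma lastVert_succ_eq_of (hF : RelaxedChron (PSDValid G Set.univ) Set.univ B K F)
    {b z : V} {k : ℕ}
    (hz : (lastVert G B F x b k, z) ∈ F (k + 1)) (hx : x ∉ expand B F k)
    (hc : whiteConn G Set.univ (expand B F k) x z) :
    lastVert G B F x b (k+1) = z := by
  have h : ∃ w, (lastVert G B F x b k, w) ∈ F (k + 1) ∧ x ∉ expand B F k ∧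
      whiteConn G Set.univ (expand B F k) x w := ⟨z, hz, hx, hc⟩
  obtain ⟨h1, _, h3⟩ := lastVert_succ_spec h
  have hvz := valid_of_mem_F hF hz
  have hvw := valid_of_mem_F hF h1
  exact (hvw.2.2.2.2.2 z (Set.mem_univ z) hvz.2.2.2.2.1 hvz.2.2.2.1
    ((whiteConn_symm h3).trans hc)).symm

/-- Freshness: a later value differing from the value at time `i` is not yet blue at `i`. -/
lemma lastVert_not_mem_of_ne (hF : RelaxedChron (PSDValid G Set.univ) Set.univ B K F)
    {b : V} {i j : ℕ} (hij : i ≤ j)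
    (hne : lastVert G B F x b j ≠ lastVert G B F x b i) :
    lastVert G B F x b j ∉ expand B F i := by
  induction j, hij using Nat.le_induction with
  | base => exact absurd rfl hne
  | succ j hij ih =>
      by_cases hmv : lastVert G B F x b (j+1) = lastVert G B F x b j
      · rw [hmv] at hne ⊢; exact ih hne
      · intro hmem
        exact (move_spec hF hmv).2.2.2.1 (expand_mono hij hmem)

lemma lastVert_const (hF : RelaxedChron (PSDValid G Set.univ) Set.univ B K F)
    {b : V} (hb : b ∈ B) {i j k : ℕ} (hij : i ≤ j) (hjk : j ≤ k)
    (h : lastVert G B F x b i = lastVert G B F x b k) :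
    lastVert G B F x b j = lastVert G B F x b i := by
  by_contra hne
  have hne' : lastVert G B F x b k ≠ lastVert G B F x b j := by
    rw [← h]; exact fun hh => hne hh.symm
  exact lastVert_not_mem_of_ne hF hjk hne'
    (expand_mono hij (h ▸ lastVert_mem_expand hb i))

lemma lastVert_inj_time (hF : RelaxedChron (PSDValid G Set.univ) Set.univ B K F)
    {b b' : V} (hb : b ∈ B) (hb' : b' ∈ B) : ∀ {k : ℕ},
    lastVert G B F x b k = lastVert G B F x b' k → b = b' := by
  intro k
  induction k with
  | zero => exact fun h => h
  | succ k ih =>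
      intro h
      by_cases h1 : lastVert G B F x b (k+1) = lastVert G B F x b k <;>
        by_cases h2 : lastVert G B F x b' (k+1) = lastVert G B F x b' k
      · exact ih (h1 ▸ h2 ▸ h)
      · obtain ⟨_, _, _, hw, _, _⟩ := move_spec hF h2
        rw [← h, h1] at hw
        exact absurd (lastVert_mem_expand hb k) hw
      · obtain ⟨_, _, _, hw, _, _⟩ := move_spec hF h1
        rw [h, h2] at hw
        exact absurd (lastVert_mem_expand hb' k) hw
      · obtain ⟨hf1, _, _, _, _, _⟩ := move_spec hF h1
        obtain ⟨hf2, _, _, _, _, _⟩ := move_spec hF h2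
        rw [h] at hf1
        exact ih (hF.uniqueForcer (k+1) _ _ _ hf1 hf2)

lemma lastVert_inj_le (hF : RelaxedChron (PSDValid G Set.univ) Set.univ B K F)
    {b b' : V} (hb : b ∈ B) (hb' : b' ∈ B) {i j : ℕ} (hij : i ≤ j)
    (h : lastVert G B F x b i = lastVert G B F x b' j) : b = b' := by
  by_cases hc : lastVert G B F x b' j = lastVert G B F x b' i
  · exact lastVert_inj_time hF hb hb' (h.trans hc)
  · exact absurd (h ▸ lastVert_mem_expand hb i)
      (lastVert_not_mem_of_ne hF hij hc)

lemma lastVert_inj (hF : RelaxedChron (PSDValid G Set.univ) Set.univ B K F)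
    {b b' : V} (hb : b ∈ B) (hb' : b' ∈ B) {i j : ℕ}
    (h : lastVert G B F x b i = lastVert G B F x b' j) : b = b' := by
  rcases le_total i j with hij | hij
  · exact lastVert_inj_le hF hb hb' hij h
  · exact (lastVert_inj_le hF hb' hb hij h.symm).symm

lemma mem_expand_cases {z : V} : ∀ {t : ℕ}, z ∈ expand B F t →
    z ∈ B ∨ ∃ s, s < t ∧ z ∉ expand B F s ∧ ∃ u, (u, z) ∈ F (s+1) := by
  intro t
  induction t with
  | zero => exact fun h => Or.inl h
  | succ t ih =>
      intro h
      by_cases hz : z ∈ expand B F t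
      · rcases ih hz with h' | ⟨s, hs, h1, h2⟩
        · exact Or.inl h'
        · exact Or.inr ⟨s, hs.trans (Nat.lt_succ_self t), h1, h2⟩
      · rcases h with h | ⟨u, hu⟩
        · exact absurd h hz
        · exact Or.inr ⟨t, Nat.lt_succ_self t, hz, u, hu⟩

/-- If the endpoint `u` of the bundle path from `b` still has a white neighbor in
the white component of `x`, the path has not moved away from `u`. -/
lemma lastVert_stay (hF : RelaxedChron (PSDValid G Set.univ) Set.univ B K F)
    {b u z : V} {m t : ℕ} (hm : m ≤ t) (hu : lastVert G B F x b m = u)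
    (hadj : G.Adj u z) (hz : z ∉ expand B F t)
    (hwc : whiteConn G Set.univ (expand B F t) x z) :
    lastVert G B F x b t = u := by
  induction t, hm using Nat.le_induction with
  | base => exact hu
  | succ t hmt ih =>
      have hz' : z ∉ expand B F t := fun hh => hz (expand_subset_succ t hh)
      have hwc' : whiteConn G Set.univ (expand B F t) x z :=
        whiteConn_mono (expand_subset_succ t) hwc
      have hut : lastVert G B F x b t = u := ih hz' hwc'
      by_cases hmv : lastVert G B F x b (t+1) = lastVert G B F x b t
      · rw [hmv, hut]
      · obtain ⟨hf, hxw, hcw, hwnot, _, _⟩ := move_spec hF hmv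
        have hv := valid_of_mem_F hF hf
        rw [hut] at hv
        have := hv.2.2.2.2.2 z (Set.mem_univ z) hadj hz'
          ((whiteConn_symm hcw).trans hwc')
        rw [this] at hz
        exact absurd (target_mem_expand hf) hz

/-- If a bundle vertex is still white at time `t`, then `x` is white at time `t`
and the vertex is in the white component of `x`. -/
lemma whiteConn_of_lastVert_not_mem (hF : RelaxedChron (PSDValid G Set.univ) Set.univ B K F)
    {b : V} (hb : b ∈ B) {t : ℕ} : ∀ {j : ℕ}, lastVert G B F x b j ∉ expand B F t →
    x ∉ expand B F t ∧ whiteConn G Set.univ (expand B F t) x (lastVert G B F x b j) := by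
  intro j
  induction j with
  | zero => exact fun h => absurd (expand_mono (Nat.zero_le t) hb) h
  | succ j ih =>
      intro h
      by_cases hmv : lastVert G B F x b (j+1) = lastVert G B F x b j
      · rw [hmv] at h ⊢; exact ih h
      · obtain ⟨hf, hxw, hcw, hwnot, _, _⟩ := move_spec hF hmv
        rcases le_or_gt (j+1) t with hjt | hjt
        · exact absurd (expand_mono hjt (target_mem_expand hf)) h
        · have hsub : expand B F t ⊆ expand B F j := expand_mono (by omega)
          exact ⟨fun hh => hxw (hsub hh), whiteConn_mono hsub hcw⟩

/-- Key lemma: any force into the white component of `x` is performed by the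
current endpoint of a bundle path, which then moves along it. -/
lemma force_into_component (hF : RelaxedChron (PSDValid G Set.univ) Set.univ B K F) :
    ∀ t, ∀ u z : V, x ∉ expand B F t → (u, z) ∈ F (t+1) →
      whiteConn G Set.univ (expand B F t) x z →
      ∃ b ∈ B, lastVert G B F x b t = u ∧ lastVert G B F x b (t+1) = z := by
  intro t
  induction t using Nat.strong_induction_on with
  | _ t ih =>
      intro u z hx hf hwc
      have hv := valid_of_mem_F hF hf
      have hu : u ∈ expand B F t := hv.2.2.1
      have hznot : z ∉ expand B F t := hv.2.2.2.1
      have hadj : G.Adj u z := hv.2.2.2.2.1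
      rcases mem_expand_cases hu with hB | ⟨s, hst, hus, p, hp⟩
      · refine ⟨u, hB, ?_, ?_⟩
        · exact lastVert_stay hF (Nat.zero_le t) rfl hadj hznot hwc
        · exact lastVert_succ_eq_of hF
            (by rw [lastVert_stay hF (Nat.zero_le t) rfl hadj hznot hwc]; exact hf) hx hwc
      · -- u was forced at step s+1; it was then in the white component of x
        have hsub : expand B F s ⊆ expand B F t := expand_mono (le_of_lt hst)
        have hzs : z ∉ expand B F s := fun hh => hznot (hsub hh)
        have hxs : x ∉ expand B F s := fun hh => hx (hsub hh)
        have hwcs : whiteConn G Set.univ (expand B F s) x z := whiteConn_mono hsub hwc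
        have hwcu : whiteConn G Set.univ (expand B F s) x u :=
          hwcs.tail ⟨hadj.symm, Set.mem_univ _, Set.mem_univ _, hzs, hus⟩
        obtain ⟨b, hbB, hbs, hbs1⟩ := ih s hst p u hxs hp hwcu
        refine ⟨b, hbB, ?_, ?_⟩
        · exact lastVert_stay hF (by omega) hbs1 hadj hznot hwc
        · exact lastVert_succ_eq_of hF
            (by rw [lastVert_stay hF (Nat.le_of_lt_succ (by omega) : s+1 ≤ t) hbs1 hadj hznot hwc]; exact hf) hx hwc

/-- The list of distinct values of `f` on `{0,…,n}`, assuming fresh values at moves. -/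
def D (f : ℕ → V) : ℕ → List V
  | 0 => [f 0]
  | (n+1) => if f (n+1) = f n then D f n else D f n ++ [f (n+1)]

lemma D_ne_nil (f : ℕ → V) : ∀ n, D f n ≠ []
  | 0 => by simp [D]
  | (n+1) => by
      rw [D]
      split
      · exact D_ne_nil f n
      · simp

lemma head?_D (f : ℕ → V) : ∀ n, (D f n).head? = some (f 0)
  | 0 => rfl
  | (n+1) => by
      rw [D]
      split
      · exact head?_D f n
      · cases hD : D f n with
        | nil => exact absurd hD (D_ne_nil f n)
        | cons c t =>
            have := head?_D f n
            rw [hD] at this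
            simpa using this

lemma getLast?_D (f : ℕ → V) : ∀ n, (D f n).getLast? = some (f n)
  | 0 => rfl
  | (n+1) => by
      rw [D]
      split
      · rename_i h; rw [h]; exact getLast?_D f n
      · exact List.getLast?_concat

lemma mem_D {f : ℕ → V} {a : V} : ∀ {n}, a ∈ D f n ↔ ∃ j ≤ n, f j = a := by
  intro n
  induction n with
  | zero => simp [D, eq_comm]
  | succ n ih =>
      rw [D]
      split
      · rename_i h
        rw [ih]
        constructor
        · rintro ⟨j, hj, rfl⟩; exact ⟨j, by omega, rfl⟩
        · rintro ⟨j, hj, rfl⟩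
          rcases Nat.le_succ_iff.mp hj with hj' | hj'
          · exact ⟨j, hj', rfl⟩
          · exact ⟨n, le_refl n, by rw [hj', h]⟩
      · rw [List.mem_append, List.mem_singleton, ih]
        constructor
        · rintro (⟨j, hj, rfl⟩ | rfl)
          · exact ⟨j, by omega, rfl⟩
          · exact ⟨n+1, le_refl _, rfl⟩
        · rintro ⟨j, hj, rfl⟩
          rcases Nat.le_succ_iff.mp hj with hj' | hj'
          · exact Or.inl ⟨j, hj', rfl⟩
          · exact Or.inr (by rw [hj'])

lemma chain'_D (f : ℕ → V) (R : V → V → Prop)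
    (h : ∀ m, f (m+1) = f m ∨ R (f m) (f (m+1))) :
    ∀ n, (D f n).Chain' R
  | 0 => by simp only [D]; exact List.isChain_singleton _
  | (n+1) => by
      rw [D]
      split
      · exact chain'_D f R h n
      · rename_i hne
        change List.IsChain R _
        rw [List.isChain_append]
        refine ⟨chain'_D f R h n, by simp, ?_⟩
        intro y hy z hz
        rw [getLast?_D] at hy
        simp only [List.head?_cons, Option.mem_def, Option.some.injEq] at hy hz
        subst hy; subst hz
        exact (h n).resolve_left hne

lemma D_const {f : ℕ → V} {T : ℕ} : ∀ {n}, T ≤ n → (∀ j, T ≤ j → j < n → f (j+1) = f j) →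
    D f n = D f T := by
  intro n
  induction n with
  | zero => intro h _; rw [Nat.le_zero.mp h]
  | succ n ih =>
      intro hT hconst
      rcases Nat.le_succ_iff.mp hT with hT' | hT'
      · rw [D, if_pos (hconst n hT' (Nat.lt_succ_self n)),
          ih hT' (fun j h1 h2 => hconst j h1 (by omega))]
      · rw [hT']

lemma dedup_append_single {l : List V} {a : V} (h : a ∉ l) :
    (l ++ [a]).dedup = l.dedup ++ [a] := by
  induction l with
  | nil => simp
  | cons b l ih =>
      have hba : b ≠ a := fun hh => h (hh ▸ (List.mem_cons_self : b ∈ b :: l))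
      have h' : a ∉ l := fun hh => h (List.mem_cons_of_mem b hh)
      by_cases hb : b ∈ l
      · rw [List.cons_append, List.dedup_cons_of_mem (by simp [hb]),
          List.dedup_cons_of_mem hb, ih h']
      · rw [List.cons_append, List.dedup_cons_of_notMem (by simp [hb, hba]),
          List.dedup_cons_of_notMem hb, ih h', List.cons_append]

lemma dedup_append_pair (l : List V) (a : V) :
    (l ++ [a, a]).dedup = (l ++ [a]).dedup := by
  induction l with
  | nil => simp [List.dedup_cons_of_mem]
  | cons b l ih =>
      by_cases hb : b ∈ l ++ [a]
      · rw [List.cons_append, List.dedup_cons_of_mem (by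
          rcases List.mem_append.mp hb with h | h
          · exact List.mem_append.mpr (Or.inl h)
          · have hba : b = a := by simpa using h
            simp [hba]), List.cons_append, List.dedup_cons_of_mem hb, ih]
      · rw [List.cons_append, List.dedup_cons_of_notMem (by
          intro hh
          rcases List.mem_append.mp hh with h | h
          · exact hb (List.mem_append.mpr (Or.inl h))
          · have hba : b = a := by simpa using h
            exact hb (List.mem_append.mpr (Or.inr (by simp [hba])))),
          List.cons_append, List.dedup_cons_of_notMem hb, ih]

lemma dedup_eq_D (f : ℕ → V)
    (hf : ∀ m j, j ≤ m → f (m+1) ≠ f m → f (m+1) ≠ f j) :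
    ∀ n, ((List.range (n+1)).map f).dedup = D f n
  | 0 => by simp [D, List.range_succ]
  | (n+1) => by
      have hsplit : (List.range (n+1+1)).map f = (List.range (n+1)).map f ++ [f (n+1)] := by
        rw [List.range_succ, List.map_append, List.map_singleton]
      by_cases h : f (n+1) = f n
      · have hsplit' : (List.range (n+1)).map f = (List.range n).map f ++ [f n] := by
          rw [List.range_succ, List.map_append, List.map_singleton]
        rw [hsplit, hsplit', List.append_assoc, h]
        show ((List.range n).map f ++ [f n, f n]).dedup = _
        rw [dedup_append_pair, ← hsplit', dedup_eq_D f hf n, D, if_pos h]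
      · have hnm : f (n+1) ∉ (List.range (n+1)).map f := by
          intro hh
          rcases List.mem_map.mp hh with ⟨j, hj, hj'⟩
          exact hf n j (by simpa using Nat.lt_succ_iff.mp (List.mem_range.mp hj)) h hj'.symm
        rw [hsplit, dedup_append_single hnm, dedup_eq_D f hf n, D, if_neg h]

lemma lastVert_fresh (hF : RelaxedChron (PSDValid G Set.univ) Set.univ B K F)
    {b : V} (hb : b ∈ B) : ∀ m j, j ≤ m →
    lastVert G B F x b (m+1) ≠ lastVert G B F x b m →
    lastVert G B F x b (m+1) ≠ lastVert G B F x b j := by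
  intro m j hjm hmv heq
  exact (move_spec hF hmv).2.2.2.1
    (heq ▸ expand_mono hjm (lastVert_mem_expand hb j))

lemma bundlePath_eq_D (hF : RelaxedChron (PSDValid G Set.univ) Set.univ B K F)
    {b : V} (hb : b ∈ B) : bundlePath G B F x K b = D (lastVert G B F x b) K :=
  dedup_eq_D _ (lastVert_fresh hF hb) K

lemma head?_bundlePath (hF : RelaxedChron (PSDValid G Set.univ) Set.univ B K F)
    {b : V} (hb : b ∈ B) : (bundlePath G B F x K b).head? = some b := by
  rw [bundlePath_eq_D hF hb, head?_D]; rfl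

lemma getLast?_bundlePath (hF : RelaxedChron (PSDValid G Set.univ) Set.univ B K F)
    {b : V} (hb : b ∈ B) :
    (bundlePath G B F x K b).getLast? = some (lastVert G B F x b K) := by
  rw [bundlePath_eq_D hF hb, getLast?_D]

lemma mem_bundlePath {b v : V} :
    v ∈ bundlePath G B F x K b ↔ ∃ j ≤ K, lastVert G B F x b j = v := by
  rw [bundlePath, List.mem_dedup, List.mem_map]
  constructor
  · rintro ⟨j, hj, rfl⟩; exact ⟨j, by simpa using Nat.lt_succ_iff.mp (List.mem_range.mp hj), rfl⟩
  · rintro ⟨j, hj, rfl⟩; exact ⟨j, List.mem_range.mpr (by omega), rfl⟩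

lemma isPathList_bundlePath (hF : RelaxedChron (PSDValid G Set.univ) Set.univ B K F)
    {b : V} (hb : b ∈ B) : IsPathList G (bundlePath G B F x K b) := by
  refine ⟨?_, ?_, ?_⟩
  · rw [bundlePath_eq_D hF hb]; exact D_ne_nil _ K
  · exact List.nodup_dedup _
  · rw [bundlePath_eq_D hF hb]
    refine chain'_D _ _ (fun m => ?_) K
    by_cases hmv : lastVert G B F x b (m+1) = lastVert G B F x b m
    · exact Or.inl hmv
    · exact Or.inr ((move_spec hF hmv).2.2.2.2.1)

lemma heads_bundle (hF : RelaxedChron (PSDValid G Set.univ) Set.univ B K F) :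
    {v | ∃ l ∈ (fun b => bundlePath G B F x K b) '' B, l.head? = some v} = B := by
  ext v
  simp only [Set.mem_image, Set.mem_setOf_eq]
  constructor
  · rintro ⟨l, ⟨b, hb, rfl⟩, hh⟩
    rw [head?_bundlePath hF hb] at hh
    rwa [← Option.some_inj.mp hh]
  · intro hv
    exact ⟨bundlePath G B F x K v, ⟨v, hv, rfl⟩, head?_bundlePath hF hv⟩

lemma bundle_isLinkage (hF : RelaxedChron (PSDValid G Set.univ) Set.univ B K F) :
    IsLinkage G {v | ∃ l ∈ (fun b => bundlePath G B F x K b) '' B, l.head? = some v}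
      {v | ∃ l ∈ (fun b => bundlePath G B F x K b) '' B, l.getLast? = some v}
      ((fun b => bundlePath G B F x K b) '' B) := by
  refine ⟨?_, ?_, ?_, ?_, rfl, rfl⟩
  · rintro l ⟨b, hb, rfl⟩
    exact isPathList_bundlePath hF hb
  · rintro l ⟨b, hb, rfl⟩ l' ⟨b', hb', rfl⟩ hne v hv hv'
    rcases mem_bundlePath.mp hv with ⟨j, hj, hje⟩
    rcases mem_bundlePath.mp hv' with ⟨j', hj', hje'⟩
    exact hne (by rw [lastVert_inj hF hb hb' (hje.trans hje'.symm)])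
  · rintro l ⟨b, hb, rfl⟩ l' ⟨b', hb', rfl⟩ hh
    rw [head?_bundlePath hF hb, head?_bundlePath hF hb'] at hh
    rw [Option.some_inj.mp hh]
  · rintro l ⟨b, hb, rfl⟩ l' ⟨b', hb', rfl⟩ hh
    rw [getLast?_bundlePath hF hb, getLast?_bundlePath hF hb'] at hh
    rw [lastVert_inj hF hb hb' (Option.some_inj.mp hh)]

lemma whiteConn_getLast {Bl : Set V} : ∀ (S : List V), S.Chain' G.Adj →
    (∀ z ∈ S, z ∉ Bl) → ∀ z ∈ S, ∀ e, S.getLast? = some e →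
    whiteConn G Set.univ Bl z e := by
  intro S
  induction S with
  | nil => intro _ _ z hz; exact absurd hz List.not_mem_nil
  | cons a S' ih =>
      intro hchain hwhite z hz e he
      cases S' with
      | nil =>
          simp only [List.mem_singleton] at hz
          simp only [List.getLast?_singleton, Option.some_inj] at he
          rw [hz, ← he]
          exact Relation.ReflTransGen.refl
      | cons c t =>
          have hchain' : (c :: t).Chain' G.Adj := hchain.tail
          have hwhite' : ∀ z ∈ c :: t, z ∉ Bl :=
            fun z hz => hwhite z (List.mem_cons_of_mem a hz)
          have he' : (c :: t).getLast? = some e := by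
            rw [← he]; rfl
          rcases List.mem_cons.mp hz with rfl | hz'
          · have hac : G.Adj z c := List.isChain_cons_cons.mp hchain |>.1
            have step : whiteConn G Set.univ Bl z c :=
              Relation.ReflTransGen.single
                ⟨hac, Set.mem_univ _, Set.mem_univ _,
                  hwhite z (List.mem_cons_self), hwhite' c (List.mem_cons_self)⟩
            exact step.trans (ih hchain' hwhite' c (List.mem_cons_self) e he')
          · exact ih hchain' hwhite' z hz' e he'

lemma lasts_bundle (hF : RelaxedChron (PSDValid G Set.univ) Set.univ B K F) :
    {v | ∃ l ∈ (fun b => bundlePath G B F x K b) '' B, l.getLast? = some v}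
      = {v | ∃ b ∈ B, lastVert G B F x b K = v} := by
  ext v
  simp only [Set.mem_image, Set.mem_setOf_eq]
  constructor
  · rintro ⟨l, ⟨b, hb, rfl⟩, hh⟩
    rw [getLast?_bundlePath hF hb] at hh
    exact ⟨b, hb, Option.some_inj.mp hh⟩
  · rintro ⟨b, hb, rfl⟩
    exact ⟨bundlePath G B F x K b, ⟨b, hb, rfl⟩, getLast?_bundlePath hF hb⟩

lemma bundle_rigid_aux (hF : RelaxedChron (PSDValid G Set.univ) Set.univ B K F)
    {P' : Set (List V)}
    (hP' : IsLinkage G B {v | ∃ b ∈ B, lastVert G B F x b K = v} P') :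
    P' = (fun b => bundlePath G B F x K b) '' B := by
  obtain ⟨hPath, hDisj, hHead, hLast, hα, hβ⟩ := hP'
  have hex : ∀ b, b ∈ B → ∃ l, l ∈ P' ∧ l.head? = some b := by
    intro b hb
    have hb' : b ∈ {v | ∃ l ∈ P', l.head? = some v} := hα ▸ hb
    obtain ⟨l, hl, hh⟩ := hb'
    exact ⟨l, hl, hh⟩
  choose L hL hLhead using hex
  have hLne : ∀ b hb b' hb', b ≠ b' → L b hb ≠ L b' hb' := by
    intro b hb b' hb' hne heq
    apply hne
    have := hLhead b hb
    rw [heq, hLhead b' hb'] at this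
    exact (Option.some_inj.mp this).symm
  have hxK : x ∈ expand B F K := hF.complete (Set.mem_univ x)
  set T := sInf {t | x ∈ expand B F t} with hTdef
  have hTmem : x ∈ expand B F T :=
    (Nat.sInf_mem (⟨K, hxK⟩ : {t | x ∈ expand B F t}.Nonempty) : T ∈ {t | x ∈ expand B F t})
  have hTle : T ≤ K := Nat.sInf_le (show K ∈ {t | x ∈ expand B F t} from hxK)
  have hTlt : ∀ t, t < T → x ∉ expand B F t := fun t ht => Nat.notMem_of_lt_sInf ht
  have hstab : ∀ (b : V) m, T ≤ m →
      lastVert G B F x b (m+1) = lastVert G B F x b m := by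
    intro b m hm
    apply lastVert_succ_of_not
    rintro ⟨w, _, hxw, _⟩
    exact hxw (expand_mono hm hTmem)
  -- the main invariant
  have inv : ∀ t, t ≤ T → ∀ b (hb : b ∈ B), ∃ S : List V,
      L b hb = D (lastVert G B F x b) t ++ S ∧ ∀ z ∈ S, z ∉ expand B F t := by
    intro t
    induction t with
    | zero =>
        intro _ b hb
        have hne := (hPath _ (hL b hb)).1
        have hcons : L b hb = b :: (L b hb).tail := by
          cases hLb : L b hb with
          | nil => exact absurd hLb hne
          | cons c t' =>
              have := hLhead b hb
              rw [hLb] at this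
              simp only [List.head?_cons, Option.some_inj] at this
              rw [this]
              rfl
        refine ⟨(L b hb).tail, by rw [D]; exact hcons, ?_⟩
        intro z hz hzB
        have hzB' : (z : V) ∈ B := hzB
        obtain ⟨l', hl', hh'⟩ : ∃ l', l' ∈ P' ∧ l'.head? = some z :=
          ⟨L z hzB', hL z hzB', hLhead z hzB'⟩
        by_cases heq : l' = L b hb
        · rw [heq, hcons] at hh'
          simp only [List.head?_cons, Option.some_inj] at hh'
          have hnodup := (hPath _ (hL b hb)).2.1
          rw [hcons] at hnodup
          exact (List.nodup_cons.mp hnodup).1 (hh'.symm ▸ hz)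
        · exact hDisj _ (hL b hb) _ hl' (fun hh => heq hh.symm) z
            ((List.tail_sublist _).mem hz)
            (List.mem_of_mem_head? (by rw [hh']; rfl))
    | succ t ih =>
        intro ht b₀ hb₀
        have htT : t < T := ht
        have hxT : x ∉ expand B F t := hTlt t htT
        have ihT := ih (le_of_lt htT)
        choose S hSdec hSwhite using ihT
        -- every suffix vertex is in the white component of x
        have hSconn : ∀ b (hb : b ∈ B), ∀ z ∈ S b hb,
            whiteConn G Set.univ (expand B F t) x z := by
          intro b hb z hz
          have hSne : S b hb ≠ [] := List.ne_nil_of_mem hz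
          set e := (S b hb).getLast hSne with hedef
          have he : (S b hb).getLast? = some e := List.getLast?_eq_getLast hSne
          have hlastL : (L b hb).getLast? = some e := by
            rw [hSdec b hb, List.getLast?_append, he]; rfl
          have heβ : e ∈ {v | ∃ b' ∈ B, lastVert G B F x b' K = v} :=
            hβ ▸ ⟨L b hb, hL b hb, hlastL⟩
          obtain ⟨b', hb', he'⟩ := heβ
          have heS : e ∈ S b hb := List.getLast_mem hSne
          have heW : e ∉ expand B F t := hSwhite b hb e heS
          have hconn_e : whiteConn G Set.univ (expand B F t) x e := by
            rw [← he'] at heW ⊢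
            exact (whiteConn_of_lastVert_not_mem hF hb' heW).2
          have hchainS : (S b hb).Chain' G.Adj :=
            ((hPath _ (hL b hb)).2.2).suffix ⟨_, (hSdec b hb).symm⟩
          have hze : whiteConn G Set.univ (expand B F t) z e :=
            whiteConn_getLast _ hchainS (hSwhite b hb) z hz e he
          exact hconn_e.trans (whiteConn_symm hze)
        -- a moving bundle path consumes the head of its suffix
        have hmvhead : ∀ b (hb : b ∈ B),
            lastVert G B F x b (t+1) ≠ lastVert G B F x b t →
            (S b hb).head? = some (lastVert G B F x b (t+1)) := by
          intro b hb hmv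
          obtain ⟨hf, hxw, hcw, hwnot, hadj, htK⟩ := move_spec hF hmv
          have hSne : S b hb ≠ [] := by
            intro hnil
            have hlastL : (L b hb).getLast? = some (lastVert G B F x b t) := by
              rw [hSdec b hb, hnil, List.append_nil, getLast?_D]
            have hmem : lastVert G B F x b t ∈
                {v | ∃ b' ∈ B, lastVert G B F x b' K = v} :=
              hβ ▸ ⟨L b hb, hL b hb, hlastL⟩
            obtain ⟨b', hb', he'⟩ := hmem
            have hbb' : b' = b := lastVert_inj hF hb' hb he'
            subst hbb'
            exact hmv (lastVert_const hF hb (Nat.le_succ t) htK he'.symm)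
          obtain ⟨s, S', hS'⟩ := List.exists_cons_of_ne_nil hSne
          have hchain := (hPath _ (hL b hb)).2.2
          rw [hSdec b hb, hS'] at hchain; change List.IsChain G.Adj _ at hchain; rw [List.isChain_append] at hchain
          have hadj2 : G.Adj (lastVert G B F x b t) s :=
            hchain.2.2 _ (by rw [getLast?_D]; rfl) _ rfl
          have hsW : s ∉ expand B F t :=
            hSwhite b hb s (by rw [hS']; exact List.mem_cons_self)
          have hsC : whiteConn G Set.univ (expand B F t) x s :=
            hSconn b hb s (by rw [hS']; exact List.mem_cons_self)
          have hv := valid_of_mem_F hF hf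
          have hs_eq : s = lastVert G B F x b (t+1) :=
            hv.2.2.2.2.2 s (Set.mem_univ s) hadj2 hsW ((whiteConn_symm hcw).trans hsC)
          rw [hS', hs_eq]
          rfl
        -- suffix vertices are not colored at step t+1 (unless consumed)
        have hnotforced : ∀ b (hb : b ∈ B), ∀ z ∈ S b hb,
            z ∈ expand B F (t+1) → (S b hb).head? = some z ∧
              lastVert G B F x b (t+1) ≠ lastVert G B F x b t := by
          intro b hb z hz hzE
          have hzW : z ∉ expand B F t := hSwhite b hb z hz
          rcases hzE with hzE | ⟨u, hu⟩
          · exact absurd hzE hzW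
          · obtain ⟨b'', hb'', hu1, hu2⟩ :=
              force_into_component hF t u z hxT hu (hSconn b hb z hz)
            have hmv'' : lastVert G B F x b'' (t+1) ≠ lastVert G B F x b'' t := by
              rw [hu2]
              intro heq
              exact hzW (heq ▸ lastVert_mem_expand hb'' t)
            have hhead'' := hmvhead b'' hb'' hmv''
            rw [hu2] at hhead''
            by_cases hbb : b = b''
            · subst hbb
              exact ⟨hhead'', by rw [hu2] at hmv'' ⊢; exact hmv''⟩
            · exfalso
              have hzL : z ∈ L b hb := by
                rw [hSdec b hb]; exact List.mem_append_right _ hz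
              have hzL'' : z ∈ L b'' hb'' := by
                rw [hSdec b'' hb'']
                exact List.mem_append_right _ (List.mem_of_mem_head? (by rw [hhead'']; rfl))
              exact hDisj _ (hL b hb) _ (hL b'' hb'') (hLne b hb b'' hb'' hbb) z hzL hzL''
        -- now build the new decomposition for b₀
        by_cases hmv : lastVert G B F x b₀ (t+1) = lastVert G B F x b₀ t
        · refine ⟨S b₀ hb₀, ?_, ?_⟩
          · rw [D, if_pos hmv]; exact hSdec b₀ hb₀
          · intro z hz hzE
            obtain ⟨_, hmv'⟩ := hnotforced b₀ hb₀ z hz hzE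
            exact hmv' hmv
        · have hhead := hmvhead b₀ hb₀ hmv
          have hSne0 : S b₀ hb₀ ≠ [] := by
            intro hnil
            rw [hnil] at hhead
            exact absurd hhead (by simp)
          obtain ⟨s, S', hS'⟩ := List.exists_cons_of_ne_nil hSne0
          rw [hS'] at hhead
          simp only [List.head?_cons, Option.some_inj] at hhead
          subst hhead
          refine ⟨S', ?_, ?_⟩
          · rw [D, if_neg hmv, List.append_assoc]
            rw [hSdec b₀ hb₀, hS']
            rfl
          · intro z hz hzE
            have hzS : z ∈ S b₀ hb₀ := by rw [hS']; exact List.mem_cons_of_mem _ hz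
            obtain ⟨hhz, _⟩ := hnotforced b₀ hb₀ z hzS hzE
            rw [hS'] at hhz
            simp only [List.head?_cons, Option.some_inj] at hhz
            subst hhz
            have hnodup := (hPath _ (hL b₀ hb₀)).2.1
            rw [hSdec b₀ hb₀, hS'] at hnodup
            have := (hnodup.sublist (List.sublist_append_right _ _))
            exact (List.nodup_cons.mp this).1 hz
  -- conclude: each L b equals the bundle path
  have key : ∀ b (hb : b ∈ B), L b hb = bundlePath G B F x K b := by
    intro b hb
    obtain ⟨S, hdec, hwhite⟩ := inv T (le_refl T) b hb
    have hSnil : S = [] := by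
      cases hS : S with
      | nil => rfl
      | cons s S' =>
          exfalso
          rw [hS] at hdec hwhite
          have hSne' : (s :: S') ≠ [] := by simp
          set e := (s :: S').getLast hSne' with hedef
          have he : (s :: S').getLast? = some e := List.getLast?_eq_getLast hSne'
          have hlastL : (L b hb).getLast? = some e := by
            rw [hdec, List.getLast?_append, he]; rfl
          have heβ : e ∈ {v | ∃ b' ∈ B, lastVert G B F x b' K = v} :=
            hβ ▸ ⟨L b hb, hL b hb, hlastL⟩
          obtain ⟨b', hb', he'⟩ := heβ
          have heW : e ∉ expand B F T := hwhite e (List.getLast_mem hSne')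
          rw [← he'] at heW
          exact (whiteConn_of_lastVert_not_mem hF hb' heW).1 hTmem
    rw [hSnil, List.append_nil] at hdec
    rw [hdec, bundlePath_eq_D hF hb,
      D_const hTle (fun j h1 h2 => hstab b j h1)]
  ext l
  constructor
  · intro hl
    have hne := (hPath l hl).1
    obtain ⟨c, l', rfl⟩ := List.exists_cons_of_ne_nil hne
    have hc : c ∈ B := hα ▸ (⟨c :: l', hl, rfl⟩ :
      c ∈ {v | ∃ l ∈ P', l.head? = some v})
    have hceq : c :: l' = L c hc :=
      hHead _ hl _ (hL c hc) (by rw [hLhead c hc]; rfl)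
    exact ⟨c, hc, by show bundlePath G B F x K c = c :: l'; rw [← key c hc, ← hceq]⟩
  · rintro ⟨b, hb, rfl⟩
    have hmem := hL b hb
    rw [key b hb] at hmem
    exact hmem

end ZFRig

/-- The path bundle of a relaxed chronology of PSD forces induced by a vertex `x`
is a rigid linkage of `G`. -/
theorem bundle_isRigidLinkage {V : Type*} [Fintype V] [DecidableEq V]
    (G : SimpleGraph V) (B : Set V) (K : ℕ) (F : ℕ → Set (V × V))
    (hB : ZF.IsForcingSet (ZF.PSDValid G Set.univ) Set.univ B)
    (hF : ZF.RelaxedChron (ZF.PSDValid G Set.univ) Set.univ B K F) (x : V) :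
    ZF.IsRigidLinkage G ((fun b => ZF.bundlePath G B F x K b) '' B) := by
  refine ⟨_, _, ZFRig.bundle_isLinkage hF, ?_⟩
  intro P' hP'
  rw [ZFRig.heads_bundle hF, ZFRig.lasts_bundle hF] at hP'
  exact ZFRig.bundle_rigid_aux hF hP'
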